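/- Let B_k = { Σ_{i=0}^{k-1} ε_i 4^i : ε_i ∈ {1,2} }. Then for all positive integers k and n with 3·4^{k-1} ≤ n < 4^k, there exist a, b ∈ B_k with a < b < n such that 2b = a + n. -/
import Mathlib


/-- B_k: integers whose k-digit base-4 expansion uses only digits 1 and 2. -/
def Bset (k : ℕ) : Set ℕ :=
  {m | ∃ ε : ℕ → ℕ, (∀ i < k, ε i = 1 ∨ ε i = 2) ∧
        m = ∑ i ∈ Finset.range k, ε i * 4 ^ i}

private lemma mod_pow_sum (n : ℕ) : ∀ k, n % 4 ^ k = ∑ i ∈ Finset.range k, n / 4 ^ i % 4 * 4 ^ i := by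
  intro k
  induction k with
  | zero => simp [Nat.mod_one]
  | succ k ih =>
    rw [Finset.sum_range_succ, ← ih, pow_succ, Nat.mod_mul, Nat.mul_comm]

private lemma geom3 : ∀ k : ℕ, 3 * ∑ i ∈ Finset.range k, 4 ^ i = 4 ^ k - 1 := by
  intro k
  induction k with
  | zero => simp
  | succ k ih =>
    rw [Finset.sum_range_succ, Nat.mul_add, ih, pow_succ]
    have : 1 ≤ 4 ^ k := Nat.one_le_pow _ _ (by norm_num)
    omega

theorem stmt_5 (k n : ℕ) (hk : 1 ≤ k) (h1 : 3 * 4 ^ (k - 1) ≤ n) (h2 : n < 4 ^ k) :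
    ∃ a ∈ Bset k, ∃ b ∈ Bset k, a < b ∧ b < n ∧ 2 * b = a + n := by
  set d : ℕ → ℕ := fun i => n / 4 ^ i % 4 with hd
  set ε : ℕ → ℕ := fun i => if d i % 2 = 0 then 2 else 1 with hε
  set δ : ℕ → ℕ := fun i => d i / 2 + 1 with hδ
  have hdlt : ∀ i, d i < 4 := fun i => Nat.mod_lt _ (by norm_num)
  have hkey : ∀ i, 2 * δ i = ε i + d i := by
    intro i
    have := hdlt i
    simp only [hε, hδ]
    split <;> omega
  set a := ∑ i ∈ Finset.range k, ε i * 4 ^ i with ha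
  set b := ∑ i ∈ Finset.range k, δ i * 4 ^ i with hb
  have hn : n = ∑ i ∈ Finset.range k, d i * 4 ^ i := by
    have := mod_pow_sum n k
    rwa [Nat.mod_eq_of_lt h2] at this
  have h2b : 2 * b = a + n := by
    rw [ha, hb, hn, Finset.mul_sum, ← Finset.sum_add_distrib]
    apply Finset.sum_congr rfl
    intro i _
    rw [← Nat.mul_assoc, hkey i, Nat.add_mul]
  have hble : b ≤ ∑ i ∈ Finset.range k, 2 * 4 ^ i := by
    apply Finset.sum_le_sum
    intro i _
    have := hdlt i
    have : δ i ≤ 2 := by simp only [hδ]; omega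
    exact Nat.mul_le_mul_right _ this
  have h3b : 3 * b ≤ 2 * 4 ^ k - 2 := by
    calc 3 * b ≤ 3 * ∑ i ∈ Finset.range k, 2 * 4 ^ i := by omega
    _ = 2 * (3 * ∑ i ∈ Finset.range k, 4 ^ i) := by rw [← Finset.mul_sum]; ring
    _ = 2 * (4 ^ k - 1) := by rw [geom3]
    _ = 2 * 4 ^ k - 2 := by omega
  have hpow : 4 ^ k = 4 * 4 ^ (k - 1) := by
    conv_lhs => rw [← Nat.succ_pred_eq_of_pos hk]
    rw [pow_succ, Nat.mul_comm]; rfl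
  have hbn : b < n := by
    have h1' : 9 * 4 ^ (k - 1) ≤ 3 * n := by omega
    have : 1 ≤ 4 ^ (k - 1) := Nat.one_le_pow _ _ (by norm_num)
    omega
  refine ⟨a, ⟨ε, fun i _ => ?_, rfl⟩, b, ⟨δ, fun i _ => ?_, rfl⟩, by omega, hbn, h2b⟩
  · simp only [hε]; split <;> omega
  · have := hdlt i; simp only [hδ]; omega
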